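/- Let G be a countable amenable group, (X, x₀) a compact pointed G-space, and let S_{x₀} denote the Bebutov map. Then the adjoint map S_{x₀}* sends the set of left-invariant means on G onto the set of G-invariant Borel probability measures on X, and maps extreme left-invariant means to ergodic G-invariant measures. -/

import Mathlib

open scoped Classical BoundedContinuousFunction

/-- Left translation `t ↦ g⁻¹ * t` as a continuous map (G discrete). -/
def lTransMap (G : Type*) [Group G] [TopologicalSpace G] [DiscreteTopology G] (g : G) :
    C(G, G) := ⟨fun t => g⁻¹ * t, continuous_of_discreteTopology⟩

/-- The left translation action on ℓ∞(G): `(g · φ)(t) = φ(g⁻¹ t)`. -/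
noncomputable def lTrans (G : Type*) [Group G] [TopologicalSpace G] [DiscreteTopology G]
    (g : G) (f : G →ᵇ ℝ) : G →ᵇ ℝ := f.compContinuous (lTransMap G g)

/-- A mean on G: a positive unital linear functional on ℓ∞(G). -/
def IsMean (G : Type*) [Group G] [TopologicalSpace G] [DiscreteTopology G]
    (m : (G →ᵇ ℝ) →ₗ[ℝ] ℝ) : Prop :=
  m 1 = 1 ∧ ∀ f : G →ᵇ ℝ, 0 ≤ f → 0 ≤ m f

/-- A left-invariant mean on G. -/
def IsLeftInvariantMean (G : Type*) [Group G] [TopologicalSpace G] [DiscreteTopology G]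
    (m : (G →ᵇ ℝ) →ₗ[ℝ] ℝ) : Prop :=
  IsMean G m ∧ ∀ (g : G) (f : G →ᵇ ℝ), m (lTrans G g f) = m f

/-- The indicator function of a set, as an element of ℓ∞(G). -/
noncomputable def indBCF (G : Type*) [Group G] [TopologicalSpace G] [DiscreteTopology G]
    (A : Set G) : G →ᵇ ℝ :=
  BoundedContinuousFunction.ofNormedAddCommGroup (Set.indicator A 1)
    continuous_of_discreteTopology 1 (by
      intro x
      by_cases h : x ∈ A <;> simp [Set.indicator_apply, h])

open MeasureTheory

/-- The orbit map `g ↦ g • x₀` as a continuous map (G discrete). -/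
def orbMap (G X : Type*) [Group G] [TopologicalSpace G] [DiscreteTopology G]
    [TopologicalSpace X] [MulAction G X] (x₀ : X) : C(G, X) :=
  ⟨fun g => g • x₀, continuous_of_discreteTopology⟩


section HelperLemmas
open Filter Topology
open scoped NNReal ENNReal
set_option linter.unusedSectionVars false

section LT
variable {G : Type*} [Group G] [TopologicalSpace G] [DiscreteTopology G]

variable {G : Type*} [Group G] [TopologicalSpace G] [DiscreteTopology G]

@[simp] lemma lTrans_apply (g : G) (f : G →ᵇ ℝ) (t : G) : lTrans G g f t = f (g⁻¹ * t) := rfl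

lemma lTrans_one (g : G) : lTrans G g (1 : G →ᵇ ℝ) = 1 := by
  ext t; simp

lemma lTrans_add (g : G) (f h : G →ᵇ ℝ) :
    lTrans G g (f + h) = lTrans G g f + lTrans G g h := by ext t; simp

lemma lTrans_smul (g : G) (c : ℝ) (f : G →ᵇ ℝ) :
    lTrans G g (c • f) = c • lTrans G g f := by ext t; simp

lemma lTrans_mul (g : G) (f h : G →ᵇ ℝ) :
    lTrans G g (f * h) = lTrans G g f * lTrans G g h := by ext t; simp

lemma lTrans_lTrans (a b : G) (f : G →ᵇ ℝ) :
    lTrans G a (lTrans G b f) = lTrans G (a * b) f := by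
  ext t; simp [mul_inv_rev, mul_assoc]

lemma lTrans_id (f : G →ᵇ ℝ) : lTrans G 1 f = f := by
  ext t; simp

lemma lTrans_nonneg (g : G) {f : G →ᵇ ℝ} (hf : 0 ≤ f) : 0 ≤ lTrans G g f := by
  intro t
  simpa using hf (g⁻¹ * t)

lemma norm_lTrans_le (g : G) (f : G →ᵇ ℝ) : ‖lTrans G g f‖ ≤ ‖f‖ :=
  BoundedContinuousFunction.norm_compContinuous_le f (lTransMap G g)

variable {m : (G →ᵇ ℝ) →ₗ[ℝ] ℝ} (hm : IsMean G m)

lemma IsMean.mono (hm : IsMean G m) {f h : G →ᵇ ℝ} (hfh : f ≤ h) : m f ≤ m h := by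
  have := hm.2 (h - f) (by simpa [sub_nonneg] using hfh)
  have h2 : m (h - f) = m h - m f := by rw [map_sub]
  linarith [this, h2.symm ▸ this]

lemma IsMean.const (hm : IsMean G m) (c : ℝ) :
    m ((BoundedContinuousFunction.const G c)) = c := by
  have : (BoundedContinuousFunction.const G c) = c • (1 : G →ᵇ ℝ) := by ext t; simp
  rw [this, _root_.map_smul, hm.1, smul_eq_mul, mul_one]

lemma bcf_apply_le_norm (f : G →ᵇ ℝ) (t : G) : f t ≤ ‖f‖ :=
  (le_abs_self _).trans (by simpa [Real.norm_eq_abs] using f.norm_coe_le_norm t)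

lemma bcf_neg_norm_le_apply (f : G →ᵇ ℝ) (t : G) : -‖f‖ ≤ f t := by
  have := bcf_apply_le_norm (-f) t
  simp only [BoundedContinuousFunction.coe_neg, Pi.neg_apply, norm_neg] at this
  linarith

lemma IsMean.abs_le_norm (hm : IsMean G m) (f : G →ᵇ ℝ) : |m f| ≤ ‖f‖ := by
  rw [abs_le]
  constructor
  · have h1 : BoundedContinuousFunction.const G (-‖f‖) ≤ f := fun t => by
      simpa using bcf_neg_norm_le_apply f t
    have := hm.mono h1
    rwa [hm.const] at this
  · have h1 : f ≤ BoundedContinuousFunction.const G ‖f‖ := fun t => by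
      simpa using bcf_apply_le_norm f t
    have := hm.mono h1
    rwa [hm.const] at this

lemma IsMean.abs_le_of_sandwich (hm : IsMean G m) {f h : G →ᵇ ℝ}
    (h1 : -h ≤ f) (h2 : f ≤ h) : |m f| ≤ m h := by
  rw [abs_le]
  constructor
  · have := hm.mono h1
    rw [map_neg] at this
    linarith
  · exact hm.mono h2


end LT

section MeasureExt
variable {Ω : Type*} [MeasurableSpace Ω] [TopologicalSpace Ω]
    [TopologicalSpace.PseudoMetrizableSpace Ω] [BorelSpace Ω]

lemma measure_ext_of_integral_bcf {μ ν : Measure Ω} [IsFiniteMeasure μ] [IsFiniteMeasure ν]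
    (h : ∀ f : Ω →ᵇ ℝ, ∫ x, f x ∂μ = ∫ x, f x ∂ν) : μ = ν := by
  apply ext_of_forall_lintegral_eq_of_IsFiniteMeasure
  intro f
  have hco : LipschitzWith 1 ((↑) : ℝ≥0 → ℝ) := LipschitzWith.of_dist_le_mul (by
    intro a b; simp [NNReal.dist_eq, Real.dist_eq])
  let g : Ω →ᵇ ℝ := f.comp _ hco
  have hg : ∀ x, g x = (f x : ℝ) := fun x => rfl
  have h1 : (∫⁻ x, f x ∂μ).toReal = (∫⁻ x, f x ∂ν).toReal := by
    rw [f.toReal_lintegral_coe_eq_integral μ, f.toReal_lintegral_coe_eq_integral ν]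
    simpa [hg] using h g
  exact (ENNReal.toReal_eq_toReal_iff' (f.lintegral_lt_top_of_nnreal μ).ne
    (f.lintegral_lt_top_of_nnreal ν).ne).mp h1

end MeasureExt

section Approx
variable {X : Type*} [MeasurableSpace X] [TopologicalSpace X]
    [TopologicalSpace.MetrizableSpace X] [BorelSpace X]

/-- L¹ approximation of an indicator by bounded continuous functions. -/
lemma exists_bcf_approx_indicator (μ : Measure X) [IsFiniteMeasure μ]
    {s : Set X} (hs : MeasurableSet s) {ε : ℝ} (hε : 0 < ε) :
    ∃ f : X →ᵇ ℝ, (∀ x, f x ∈ Set.Icc (0:ℝ) 1) ∧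
      ∫ x, |f x - s.indicator 1 x| ∂μ ≤ ε := by
  letI : MetricSpace X := TopologicalSpace.metrizableSpaceMetric X
  have hε2 : (0:ℝ≥0∞) < ENNReal.ofReal (ε/2) := by
    simp [ENNReal.ofReal_pos]; linarith
  obtain ⟨K, hKs, hKc, hK⟩ := hs.exists_isClosed_lt_add (μ := μ) (by simp) hε2.ne'
  obtain ⟨U, hsU, hUo, hU⟩ := Set.exists_isOpen_lt_add (A := s) (μ := μ) (by simp) hε2.ne'
  -- Urysohn
  obtain ⟨f, hf0, hf1, hf01⟩ := exists_continuous_zero_one_of_isClosed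
    (hUo.isClosed_compl) hKc (by
      rw [Set.disjoint_compl_left_iff_subset]
      exact hKs.trans hsU)
  have hUK : μ (U \ K) ≤ ENNReal.ofReal ε := by
    rw [measure_diff (hKs.trans hsU) hKc.measurableSet.nullMeasurableSet (measure_ne_top μ K)]
    have h2 : μ U ≤ μ K + ENNReal.ofReal ε := by
      calc μ U ≤ μ s + ENNReal.ofReal (ε/2) := hU.le
        _ ≤ (μ K + ENNReal.ofReal (ε/2)) + ENNReal.ofReal (ε/2) := add_le_add hK.le le_rfl
        _ = μ K + ENNReal.ofReal ε := by
            rw [add_assoc, ← ENNReal.ofReal_add (by linarith) (by linarith)]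
            norm_num
    exact tsub_le_iff_right.mpr (by rwa [add_comm] at h2)
  set F : X →ᵇ ℝ := BoundedContinuousFunction.ofNormedAddCommGroup f f.continuous 1 (fun x => by
    have := hf01 x
    rw [Real.norm_eq_abs, abs_le]
    constructor <;> [linarith [this.1]; exact this.2]) with hF
  have hFx : ∀ x, F x = f x := fun x => rfl
  refine ⟨F, fun x => by rw [hFx]; exact hf01 x, ?_⟩
  have hpt : ∀ x, |F x - s.indicator 1 x| ≤ (U \ K).indicator 1 x := by
    intro x
    rw [hFx]
    by_cases hxK : x ∈ K
    · have h1 : f x = 1 := hf1 hxK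
      have h3 : (0:ℝ) ≤ (U \ K).indicator 1 x := Set.indicator_apply_nonneg (by intro _; norm_num)
      have h2 : |f x - s.indicator (1 : X → ℝ) x| = 0 := by
        rw [h1]; simp [Set.indicator_apply, hKs hxK]
      rw [h2]; exact h3
    · by_cases hxU : x ∈ U
      · have h4 : (U \ K).indicator (1 : X → ℝ) x = 1 :=
          Set.indicator_of_mem ((Set.mem_diff x).mpr ⟨hxU, hxK⟩) 1
        rw [h4, abs_le]
        have h5 := hf01 x
        have h6 : s.indicator (1 : X → ℝ) x ∈ Set.Icc (0:ℝ) 1 := by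
          by_cases hxs : x ∈ s <;> simp [hxs]
        obtain ⟨h5a, h5b⟩ := h5; obtain ⟨h6a, h6b⟩ := h6
        constructor <;> linarith
      · have h1 : f x = 0 := hf0 hxU
        have h3 : (0:ℝ) ≤ (U \ K).indicator 1 x := Set.indicator_apply_nonneg (by intro _; norm_num)
        have h2 : |f x - s.indicator (1 : X → ℝ) x| = 0 := by
          rw [h1]; have hxs : x ∉ s := fun hxs => hxU (hsU hxs)
          simp [Set.indicator_apply, hxs]
        rw [h2]; exact h3
  have hint : Integrable ((U \ K).indicator (1 : X → ℝ)) μ :=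
    (integrable_const (1:ℝ)).indicator (hUo.measurableSet.diff hKc.measurableSet)
  calc ∫ x, |F x - s.indicator 1 x| ∂μ
      ≤ ∫ x, (U \ K).indicator 1 x ∂μ :=
        integral_mono_of_nonneg (Filter.Eventually.of_forall (fun x => abs_nonneg _)) hint
          (Filter.Eventually.of_forall hpt)
    _ = (μ (U \ K)).toReal := integral_indicator_one (hUo.measurableSet.diff hKc.measurableSet)
    _ ≤ ε := ENNReal.toReal_le_of_le_ofReal hε.le hUK

end Approx

section UlimHelper

open Filter Topology
open scoped NNReal ENNReal

noncomputable def natU : Ultrafilter ℕ := Ultrafilter.of Filter.atTop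

lemma natU_le_atTop : (natU : Filter ℕ) ≤ Filter.atTop := Ultrafilter.of_le _

noncomputable def ulim (x : ℕ → ℝ) : ℝ := limUnder (natU : Filter ℕ) x

lemma ulim_spec {x : ℕ → ℝ} {C : ℝ} (hx : ∀ n, |x n| ≤ C) :
    Filter.Tendsto x (natU : Filter ℕ) (nhds (ulim x)) := by
  obtain ⟨L, -, hL⟩ := (isCompact_Icc (a := -C) (b := C)).ultrafilter_le_nhds
    (Ultrafilter.map x natU) (by
      refine Filter.le_principal_iff.mpr ?_
      rw [Ultrafilter.coe_map]
      exact Filter.mem_map.mpr (Filter.univ_mem' (fun n => abs_le.mp (hx n))))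
  exact tendsto_nhds_limUnder ⟨L, hL⟩

lemma ulim_eq {x : ℕ → ℝ} {L : ℝ} {C : ℝ} (hx : ∀ n, |x n| ≤ C)
    (h : Filter.Tendsto x (natU : Filter ℕ) (nhds L)) : ulim x = L :=
  tendsto_nhds_unique (ulim_spec hx) h

end UlimHelper


section Beb
variable (G X : Type*) [Group G] [TopologicalSpace G] [DiscreteTopology G]
    [TopologicalSpace X] [MulAction G X] (x₀ : X)

/-- The Bebutov map as a linear map. -/
noncomputable def beb : (X →ᵇ ℝ) →ₗ[ℝ] (G →ᵇ ℝ) where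
  toFun f := f.compContinuous (orbMap G X x₀)
  map_add' f h := by ext t; simp [orbMap]
  map_smul' c f := by ext t; simp [orbMap]

variable {G X}

@[simp] lemma beb_apply (f : X →ᵇ ℝ) (t : G) : beb G X x₀ f t = f (t • x₀) := rfl

lemma beb_def (f : X →ᵇ ℝ) : beb G X x₀ f = f.compContinuous (orbMap G X x₀) := rfl

lemma beb_one : beb G X x₀ (1 : X →ᵇ ℝ) = 1 := by ext t; simp

lemma beb_mul (f h : X →ᵇ ℝ) : beb G X x₀ (f * h) = beb G X x₀ f * beb G X x₀ h := by
  ext t; simp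

lemma beb_nonneg {f : X →ᵇ ℝ} (hf : 0 ≤ f) : 0 ≤ beb G X x₀ f := by
  intro t; simpa using hf (t • x₀)

lemma norm_beb_le (f : X →ᵇ ℝ) : ‖beb G X x₀ f‖ ≤ ‖f‖ :=
  BoundedContinuousFunction.norm_compContinuous_le f (orbMap G X x₀)

lemma lTrans_beb (g : G) (hg : Continuous fun x : X => g • x) (f : X →ᵇ ℝ) :
    lTrans G g⁻¹ (beb G X x₀ f) = beb G X x₀ (f.compContinuous ⟨fun x => g • x, hg⟩) := by
  ext t
  simp [lTrans, lTransMap, orbMap, mul_smul]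

end Beb

end HelperLemmas

set_option maxHeartbeats 1000000 in
/-- The adjoint of the Bebutov map sends left-invariant means onto the set of
`G`-invariant Borel probability measures on `X`, and sends extreme left-invariant means
to ergodic `G`-invariant measures. -/
theorem bebutov_adjoint_surjective_and_extreme_to_ergodic {G X : Type*} [Group G]
    [Countable G] [TopologicalSpace G] [DiscreteTopology G]
    [TopologicalSpace X] [CompactSpace X] [TopologicalSpace.MetrizableSpace X]
    [MeasurableSpace X] [BorelSpace X] [MulAction G X]
    (hcont : ∀ g : G, Continuous fun x : X => g • x)
    (x₀ : X) (hx₀ : Dense (Set.range fun g : G => g • x₀))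
    (hamen : ∃ m : (G →ᵇ ℝ) →ₗ[ℝ] ℝ, IsLeftInvariantMean G m) :
    -- the adjoint of the Bebutov map sends left-invariant means to invariant measures
    (∀ m : (G →ᵇ ℝ) →ₗ[ℝ] ℝ, IsLeftInvariantMean G m →
      ∀ μ : Measure X, IsProbabilityMeasure μ →
        (∀ f : X →ᵇ ℝ, ∫ x, f x ∂μ = m (f.compContinuous (orbMap G X x₀))) →
        ∀ g : G, Measure.map (fun x : X => g • x) μ = μ) ∧
    -- onto the set of `G`-invariant Borel probability measures
    (∀ μ : Measure X, IsProbabilityMeasure μ →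
      (∀ g : G, Measure.map (fun x : X => g • x) μ = μ) →
      ∃ m : (G →ᵇ ℝ) →ₗ[ℝ] ℝ, IsLeftInvariantMean G m ∧
        ∀ f : X →ᵇ ℝ, ∫ x, f x ∂μ = m (f.compContinuous (orbMap G X x₀))) ∧
    -- extreme left-invariant means are mapped to ergodic measures
    (∀ m : (G →ᵇ ℝ) →ₗ[ℝ] ℝ,
      m ∈ Set.extremePoints ℝ {m' : (G →ᵇ ℝ) →ₗ[ℝ] ℝ | IsLeftInvariantMean G m'} →
      ∀ μ : Measure X, IsProbabilityMeasure μ →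
        (∀ f : X →ᵇ ℝ, ∫ x, f x ∂μ = m (f.compContinuous (orbMap G X x₀))) →
        ∀ s : Set X, MeasurableSet s →
          (∀ g : G, (fun x : X => g • x) ⁻¹' s = s) → μ s = 0 ∨ μ s = 1) := by
  classical
  have part1 : (∀ m : (G →ᵇ ℝ) →ₗ[ℝ] ℝ, IsLeftInvariantMean G m →
      ∀ μ : Measure X, IsProbabilityMeasure μ →
        (∀ f : X →ᵇ ℝ, ∫ x, f x ∂μ = m (f.compContinuous (orbMap G X x₀))) →
        ∀ g : G, Measure.map (fun x : X => g • x) μ = μ) := by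
    intro m hm μ hμ hμm g
    have hmg : Measurable fun x : X => g • x := (hcont g).measurable
    haveI : IsProbabilityMeasure (Measure.map (fun x : X => g • x) μ) :=
      Measure.isProbabilityMeasure_map hmg.aemeasurable
    apply measure_ext_of_integral_bcf
    intro f
    rw [integral_map hmg.aemeasurable f.continuous.measurable.aestronglyMeasurable]
    have hc1 : ∫ x, f (g • x) ∂μ
        = ∫ x, (f.compContinuous ⟨fun x => g • x, hcont g⟩ : X →ᵇ ℝ) x ∂μ := rfl
    calc ∫ x, f (g • x) ∂μ
        = m ((f.compContinuous ⟨fun x => g • x, hcont g⟩ : X →ᵇ ℝ).compContinuous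
            (orbMap G X x₀)) :=
          hc1.trans (hμm (f.compContinuous ⟨fun x => g • x, hcont g⟩))
      _ = m (lTrans G g⁻¹ (beb G X x₀ f)) := by
            rw [← beb_def x₀, lTrans_beb x₀ g (hcont g)]
      _ = m (beb G X x₀ f) := hm.2 g⁻¹ _
      _ = ∫ x, f x ∂μ := (hμm f).symm
  refine ⟨part1, ?_, ?_⟩
  · -- surjectivity
    intro μ hμ hinv
    obtain ⟨m₀, hm₀⟩ := hamen
    have hBinj : Function.Injective (beb G X x₀) := by
      intro f h hfh
      have hpt : ∀ t : G, f (t • x₀) = h (t • x₀) := fun t => by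
        have := congrArg (fun F : G →ᵇ ℝ => F t) hfh
        simpa using this
      have hd : Set.EqOn ⇑f ⇑h (Set.range fun g : G => g • x₀) := by
        rintro - ⟨t, rfl⟩; exact hpt t
      have hfeq : ⇑f = ⇑h := Continuous.ext_on hx₀ f.continuous h.continuous hd
      exact BoundedContinuousFunction.ext fun x => congrFun hfeq x
    let I : (X →ᵇ ℝ) →ₗ[ℝ] ℝ :=
      { toFun := fun f => ∫ x, f x ∂μ
        map_add' := fun f h => by
          simp only [BoundedContinuousFunction.coe_add, Pi.add_apply]
          exact integral_add (f.integrable μ) (h.integrable μ)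
        map_smul' := fun c f => by
          simp only [BoundedContinuousFunction.coe_smul, Pi.smul_apply, RingHom.id_apply]
          exact integral_smul c _ }
    let pΛ : (G →ᵇ ℝ) →ₗ.[ℝ] ℝ :=
      { domain := LinearMap.range (beb G X x₀)
        toFun := I.comp ((LinearEquiv.ofInjective (beb G X x₀) hBinj).symm.toLinearMap) }
    have hΛ : ∀ f : X →ᵇ ℝ,
        pΛ ⟨beb G X x₀ f, LinearMap.mem_range_self _ f⟩ = ∫ x, f x ∂μ := by
      intro f
      have h1 : (LinearEquiv.ofInjective (beb G X x₀) hBinj) f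
          = ⟨beb G X x₀ f, LinearMap.mem_range_self _ f⟩ :=
        Subtype.ext (by simp [LinearEquiv.ofInjective_apply])
      show I ((LinearEquiv.ofInjective (beb G X x₀) hBinj).symm
        ⟨beb G X x₀ f, LinearMap.mem_range_self _ f⟩) = ∫ x, f x ∂μ
      rw [← h1, LinearEquiv.symm_apply_apply]
      rfl
    have hbdd : ∀ φ : G →ᵇ ℝ, BddAbove (Set.range ⇑φ) := fun φ =>
      ⟨‖φ‖, by rintro - ⟨t, rfl⟩; exact bcf_apply_le_norm φ t⟩
    set N : (G →ᵇ ℝ) → ℝ := fun φ => ⨆ t : G, φ t with hN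
    have hNle : ∀ (φ : G →ᵇ ℝ) (t : G), φ t ≤ N φ := fun φ t => le_ciSup (hbdd φ) t
    have N_hom : ∀ c : ℝ, 0 < c → ∀ φ : G →ᵇ ℝ, N (c • φ) = c * N φ := by
      intro c hc φ
      calc N (c • φ) = ⨆ t : G, c * φ t := by
            simp [hN, BoundedContinuousFunction.coe_smul, smul_eq_mul]
        _ = c * N φ := (Real.mul_iSup_of_nonneg hc.le _).symm
    have N_add : ∀ φ χ : G →ᵇ ℝ, N (φ + χ) ≤ N φ + N χ := by
      intro φ χ
      refine ciSup_le fun t => ?_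
      simp only [BoundedContinuousFunction.coe_add, Pi.add_apply]
      exact add_le_add (hNle φ t) (hNle χ t)
    have hfN : ∀ y : pΛ.domain, pΛ y ≤ N y := by
      rintro ⟨y, hy⟩
      obtain ⟨f, rfl⟩ := hy
      rw [hΛ f]
      set C := N (beb G X x₀ f) with hC
      have hCx : ∀ x : X, f x ≤ C := by
        have hclosed : IsClosed {x : X | f x ≤ C} := isClosed_le f.continuous continuous_const
        have hsub : (Set.range fun g : G => g • x₀) ⊆ {x : X | f x ≤ C} := by
          rintro - ⟨t, rfl⟩
          exact hNle (beb G X x₀ f) t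
        intro x
        exact hclosed.closure_subset_iff.mpr hsub (hx₀ x)
      calc ∫ x, f x ∂μ ≤ ∫ _x, C ∂μ := integral_mono (f.integrable μ) (integrable_const C) hCx
        _ = C := by simp
    obtain ⟨m₁, hm₁ext, hm₁dom⟩ := exists_extension_of_le_sublinear pΛ N N_hom N_add hfN
    have hm₁B : ∀ f : X →ᵇ ℝ, m₁ (beb G X x₀ f) = ∫ x, f x ∂μ := by
      intro f
      have := hm₁ext ⟨beb G X x₀ f, LinearMap.mem_range_self _ f⟩
      rw [this, hΛ]
    have hm₁pos : ∀ φ : G →ᵇ ℝ, 0 ≤ φ → 0 ≤ m₁ φ := by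
      intro φ hφ
      have h1 : N (-φ) ≤ 0 := ciSup_le fun t => by
        simpa using hφ t
      have h2 : m₁ (-φ) ≤ 0 := (hm₁dom (-φ)).trans h1
      rw [map_neg] at h2
      linarith
    have hm₁mean : IsMean G m₁ := by
      refine ⟨?_, hm₁pos⟩
      rw [← beb_one x₀, hm₁B]
      simp
    set Ψ : (G →ᵇ ℝ) → (G →ᵇ ℝ) := fun φ =>
      BoundedContinuousFunction.ofNormedAddCommGroup
        (fun g : G => m₁ (lTrans G g⁻¹ φ)) continuous_of_discreteTopology ‖φ‖ (fun g => by
          rw [Real.norm_eq_abs]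
          exact (hm₁mean.abs_le_norm _).trans (norm_lTrans_le _ _)) with hΨ
    have hΨapp : ∀ (φ : G →ᵇ ℝ) (g : G), Ψ φ g = m₁ (lTrans G g⁻¹ φ) := fun _ _ => rfl
    let M : (G →ᵇ ℝ) →ₗ[ℝ] ℝ :=
      { toFun := fun φ => m₀ (Ψ φ)
        map_add' := fun φ χ => by
          have h : Ψ (φ + χ) = Ψ φ + Ψ χ := by
            ext g
            simp only [hΨapp, lTrans_add, map_add, BoundedContinuousFunction.coe_add,
              Pi.add_apply]
          show m₀ (Ψ (φ + χ)) = m₀ (Ψ φ) + m₀ (Ψ χ)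
          rw [h, map_add]
        map_smul' := fun c φ => by
          have h : Ψ (c • φ) = c • Ψ φ := by
            ext g
            simp only [hΨapp, lTrans_smul, _root_.map_smul, BoundedContinuousFunction.coe_smul,
              Pi.smul_apply]
          show m₀ (Ψ (c • φ)) = (RingHom.id ℝ) c • m₀ (Ψ φ)
          rw [h, _root_.map_smul]
          rfl }
    have hMapp : ∀ φ : G →ᵇ ℝ, M φ = m₀ (Ψ φ) := fun _ => rfl
    have hM1 : M 1 = 1 := by
      have h : Ψ (1 : G →ᵇ ℝ) = 1 := by
        ext g
        rw [hΨapp, lTrans_one]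
        simpa using hm₁mean.1
      rw [hMapp, h, hm₀.1.1]
    have hMpos : ∀ φ : G →ᵇ ℝ, 0 ≤ φ → 0 ≤ M φ := by
      intro φ hφ
      rw [hMapp]
      refine hm₀.1.2 _ ?_
      intro g
      have := hm₁pos _ (lTrans_nonneg g⁻¹ hφ)
      simpa [hΨapp] using this
    have hMinv : ∀ (g : G) (φ : G →ᵇ ℝ), M (lTrans G g φ) = M φ := by
      intro g φ
      have h : Ψ (lTrans G g φ) = lTrans G g (Ψ φ) := by
        ext t
        rw [hΨapp, lTrans_lTrans]
        have : lTrans G g (Ψ φ) t = m₁ (lTrans G (g⁻¹ * t)⁻¹ φ) := by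
          rw [lTrans_apply, hΨapp]
        rw [this, mul_inv_rev, inv_inv]
      rw [hMapp, h, hm₀.2, hMapp]
    have hMB : ∀ f : X →ᵇ ℝ, M (beb G X x₀ f) = ∫ x, f x ∂μ := by
      intro f
      have h : Ψ (beb G X x₀ f) = BoundedContinuousFunction.const G (∫ x, f x ∂μ) := by
        ext t
        rw [hΨapp, lTrans_beb x₀ t (hcont t), hm₁B]
        have h2 : ∫ x, (f.compContinuous ⟨fun x => t • x, hcont t⟩ : X →ᵇ ℝ) x ∂μ
            = ∫ x, f (t • x) ∂μ := rfl
        rw [h2, ← integral_map (hcont t).measurable.aemeasurable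
          f.continuous.measurable.aestronglyMeasurable, hinv t]
        simp
      rw [hMapp, h, hm₀.1.const]
    refine ⟨M, ⟨⟨hM1, hMpos⟩, hMinv⟩, fun f => ?_⟩
    rw [← beb_def x₀ f]
    exact (hMB f).symm
  · -- extreme to ergodic
    intro m hm μ hμ hμm s hsm hsinv
    have hmean : IsLeftInvariantMean G m := hm.1
    have hinvμ : ∀ g : G, Measure.map (fun x : X => g • x) μ = μ :=
      part1 m hmean μ hμ hμm
    by_cases hs0 : μ s = 0
    · exact Or.inl hs0
    by_cases hs1 : μ s = 1
    · exact Or.inr hs1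
    exfalso
    set c : ℝ := (μ s).toReal with hcdef
    have hμs_lt : μ s < 1 := lt_of_le_of_ne prob_le_one hs1
    have hc0 : 0 < c := ENNReal.toReal_pos hs0 (measure_ne_top μ s)
    have hc1 : c < 1 := by
      have := (ENNReal.toReal_lt_toReal (measure_ne_top μ s) ENNReal.one_ne_top).mpr hμs_lt
      simpa using this
    -- the indicator of s, as a plain function
    set ind : X → ℝ := s.indicator 1 with hinddef
    have hindmeas : Measurable ind := measurable_one.indicator hsm
    have hindint : Integrable ind μ := (integrable_const (1:ℝ)).indicator hsm
    have hindinv : ∀ (g : G) (x : X), ind (g • x) = ind x := by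
      intro g x
      have hmem : g • x ∈ s ↔ x ∈ s := by
        constructor
        · intro hx
          have : x ∈ (fun x : X => g • x) ⁻¹' s := hx
          rwa [hsinv g] at this
        · intro hx
          have : x ∈ (fun x : X => g • x) ⁻¹' s := by rwa [hsinv g]
          exact this
      simp [hinddef, Set.indicator_apply, hmem]
    -- approximating sequence
    have happrox : ∀ n : ℕ, ∃ f : X →ᵇ ℝ, (∀ x, f x ∈ Set.Icc (0:ℝ) 1) ∧
        ∫ x, |f x - ind x| ∂μ ≤ 1/((n:ℝ)+1) := fun n =>
      exists_bcf_approx_indicator μ hsm (by positivity)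
    choose f hf01 hfL1 using happrox
    have hfnorm : ∀ n, ‖f n‖ ≤ 1 := by
      intro n
      refine (BoundedContinuousFunction.norm_le zero_le_one).mpr fun x => ?_
      have := hf01 n x
      rw [Real.norm_eq_abs, abs_le]
      exact ⟨by linarith [this.1], this.2⟩
    set e : ℕ → ℝ := fun n => ∫ x, |f n x - ind x| ∂μ with hedef
    have he0 : ∀ n, 0 ≤ e n := fun n => integral_nonneg fun x => abs_nonneg _
    have heT : Filter.Tendsto e Filter.atTop (nhds 0) :=
      squeeze_zero he0 hfL1 tendsto_one_div_add_atTop_nhds_zero_nat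
    have hediffint : ∀ n, Integrable (fun x => |f n x - ind x|) μ :=
      fun n => (((f n).integrable μ).sub hindint).abs
    have habs : ∀ u : X → ℝ, |∫ x, u x ∂μ| ≤ ∫ x, |u x| ∂μ := fun u => by
      simpa [Real.norm_eq_abs] using norm_integral_le_integral_norm (μ := μ) u
    -- comparison of integrals against f n with integrals against the indicator
    have hkey : ∀ (n : ℕ) (h : X →ᵇ ℝ),
        |∫ x, f n x * h x ∂μ - ∫ x, ind x * h x ∂μ| ≤ ‖h‖ * e n := by
      intro n h
      have hint1 : Integrable (fun x => f n x * h x) μ := by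
        have := ((f n) * h).integrable μ
        exact this
      have hint2 : Integrable (fun x => ind x * h x) μ := by
        have heq : (fun x => ind x * h x) = s.indicator ⇑h := by
          funext x
          by_cases hx : x ∈ s <;> simp [hinddef, Set.indicator_apply, hx]
        rw [heq]
        exact (h.integrable μ).indicator hsm
      rw [← integral_sub hint1 hint2]
      calc |∫ x, (f n x * h x - ind x * h x) ∂μ| ≤ ∫ x, |f n x * h x - ind x * h x| ∂μ :=
            habs _
        _ ≤ ∫ x, ‖h‖ * |f n x - ind x| ∂μ := by
            refine integral_mono (hint1.sub hint2).abs ((hediffint n).const_mul _) fun x => ?_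
            rw [← sub_mul, abs_mul]
            have h1 : |h x| ≤ ‖h‖ := by
              rw [← Real.norm_eq_abs]; exact h.norm_coe_le_norm x
            have h2 : (0:ℝ) ≤ |f n x - ind x| := abs_nonneg _
            calc |f n x - ind x| * |h x| ≤ |f n x - ind x| * ‖h‖ :=
                  mul_le_mul_of_nonneg_left h1 h2
              _ = ‖h‖ * |f n x - ind x| := mul_comm _ _
        _ = ‖h‖ * e n := by rw [integral_const_mul]
    -- ∫ f n → c
    have hfc : Filter.Tendsto (fun n => ∫ x, f n x ∂μ) Filter.atTop (nhds c) := by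
      have hbound : ∀ n, |∫ x, f n x ∂μ - c| ≤ e n := by
        intro n
        have hcind : c = ∫ x, ind x ∂μ := by
          rw [hinddef, hcdef, integral_indicator_one hsm]; rfl
        rw [hcind, ← integral_sub ((f n).integrable μ) hindint]
        exact habs _
      have h0 : Filter.Tendsto (fun n => ∫ x, f n x ∂μ - c) Filter.atTop (nhds 0) :=
        squeeze_zero_norm (fun n => by simpa [Real.norm_eq_abs] using hbound n) heT
      have := h0.add_const c
      simpa using this
    -- the sequences q φ and their ultrafilter limits
    set q : (G →ᵇ ℝ) → ℕ → ℝ := fun φ n => m (beb G X x₀ (f n) * φ) with hqdef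
    have hqb : ∀ (φ : G →ᵇ ℝ) (n : ℕ), |q φ n| ≤ ‖φ‖ := by
      intro φ n
      refine (hmean.1.abs_le_norm _).trans ?_
      calc ‖beb G X x₀ (f n) * φ‖ ≤ ‖beb G X x₀ (f n)‖ * ‖φ‖ := norm_mul_le _ _
        _ ≤ 1 * ‖φ‖ :=
            mul_le_mul_of_nonneg_right ((norm_beb_le x₀ (f n)).trans (hfnorm n)) (norm_nonneg φ)
        _ = ‖φ‖ := one_mul _
    set L : (G →ᵇ ℝ) → ℝ := fun φ => ulim (q φ) with hLdef
    have hLT : ∀ φ : G →ᵇ ℝ, Filter.Tendsto (q φ) (natU : Filter ℕ) (nhds (L φ)) :=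
      fun φ => ulim_spec (hqb φ)
    have hLadd : ∀ φ χ : G →ᵇ ℝ, L (φ + χ) = L φ + L χ := by
      intro φ χ
      have h1 : ∀ n, q (φ + χ) n = q φ n + q χ n := by
        intro n
        show m (beb G X x₀ (f n) * (φ + χ)) = m (beb G X x₀ (f n) * φ) + m (beb G X x₀ (f n) * χ)
        rw [mul_add, map_add]
      exact tendsto_nhds_unique (hLT (φ + χ))
        (((hLT φ).add (hLT χ)).congr fun n => (h1 n).symm)
    have hLsmul : ∀ (a : ℝ) (φ : G →ᵇ ℝ), L (a • φ) = a * L φ := by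
      intro a φ
      have h1 : ∀ n, q (a • φ) n = a * q φ n := by
        intro n
        show m (beb G X x₀ (f n) * (a • φ)) = a * m (beb G X x₀ (f n) * φ)
        rw [mul_smul_comm, _root_.map_smul, smul_eq_mul]
      exact tendsto_nhds_unique (hLT (a • φ))
        (((hLT φ).const_mul a).congr fun n => (h1 n).symm)
    have hLpos : ∀ φ : G →ᵇ ℝ, 0 ≤ φ → 0 ≤ L φ := by
      intro φ hφ
      refine ge_of_tendsto (hLT φ) (Filter.Eventually.of_forall fun n => ?_)
      refine hmean.1.2 _ fun t => ?_
      have h1 : (0:ℝ) ≤ f n (t • x₀) := (hf01 n (t • x₀)).1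
      have h2 : (0:ℝ) ≤ φ t := hφ t
      simpa [BoundedContinuousFunction.coe_mul] using mul_nonneg h1 h2
    have hLone : L 1 = c := by
      have h1 : ∀ n, q 1 n = ∫ x, f n x ∂μ := by
        intro n
        show m (beb G X x₀ (f n) * 1) = ∫ x, f n x ∂μ
        rw [mul_one]
        have h9 := hμm (f n)
        rw [← beb_def x₀ (f n)] at h9
        exact h9.symm
      exact tendsto_nhds_unique (hLT 1)
        ((hfc.mono_left natU_le_atTop).congr fun n => (h1 n).symm)
    have hmq : ∀ (φ : G →ᵇ ℝ) (n : ℕ), m φ - q φ n = m ((1 - beb G X x₀ (f n)) * φ) := by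
      intro φ n
      rw [one_sub_mul, map_sub]
    have hmqpos : ∀ (φ : G →ᵇ ℝ) (n : ℕ), 0 ≤ φ → 0 ≤ m φ - q φ n := by
      intro φ n hφ
      rw [hmq]
      refine hmean.1.2 _ fun t => ?_
      have h1 : f n (t • x₀) ≤ 1 := (hf01 n (t • x₀)).2
      have h2 : (0:ℝ) ≤ φ t := hφ t
      have : (0:ℝ) ≤ (1 - f n (t • x₀)) * φ t := mul_nonneg (by linarith) h2
      simpa [BoundedContinuousFunction.coe_mul, BoundedContinuousFunction.coe_sub] using this
    -- invariance of L
    have hLinv : ∀ (g : G) (φ : G →ᵇ ℝ), L (lTrans G g φ) = L φ := by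
      intro g φ
      have hqinv : ∀ n, q (lTrans G g φ) n
          = m (beb G X x₀ ((f n).compContinuous ⟨fun x => g • x, hcont g⟩) * φ) := by
        intro n
        show m (beb G X x₀ (f n) * lTrans G g φ) = _
        rw [← hmean.2 g⁻¹ (beb G X x₀ (f n) * lTrans G g φ), lTrans_mul, lTrans_lTrans,
          inv_mul_cancel, lTrans_id, lTrans_beb x₀ g (hcont g)]
      have hdefect : ∀ n, |q (lTrans G g φ) n - q φ n| ≤ ‖φ‖ * (2 * e n) := by
        intro n
        set d : X →ᵇ ℝ := (f n).compContinuous ⟨fun x => g • x, hcont g⟩ - f n with hddef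
        have hd1 : q (lTrans G g φ) n - q φ n = m (beb G X x₀ d * φ) := by
          rw [hqinv n, hddef, map_sub, sub_mul, map_sub]
        have hsandR : beb G X x₀ d * φ ≤ ‖φ‖ • beb G X x₀ |d| := by
          intro t
          have h1 : |d (t • x₀) * φ t| ≤ |d (t • x₀)| * ‖φ‖ := by
            rw [abs_mul]
            exact mul_le_mul_of_nonneg_left
              (by rw [← Real.norm_eq_abs]; exact φ.norm_coe_le_norm t) (abs_nonneg _)
          have key : d (t • x₀) * φ t ≤ ‖φ‖ * |d (t • x₀)| :=
            (le_abs_self _).trans (h1.trans_eq (mul_comm _ _))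
          simpa [BoundedContinuousFunction.coe_mul, BoundedContinuousFunction.coe_smul,
            BoundedContinuousFunction.coe_abs, smul_eq_mul] using key
        have hsandL : -(‖φ‖ • beb G X x₀ |d|) ≤ beb G X x₀ d * φ := by
          intro t
          have h1 : |d (t • x₀) * φ t| ≤ |d (t • x₀)| * ‖φ‖ := by
            rw [abs_mul]
            exact mul_le_mul_of_nonneg_left
              (by rw [← Real.norm_eq_abs]; exact φ.norm_coe_le_norm t) (abs_nonneg _)
          have key : -(‖φ‖ * |d (t • x₀)|) ≤ d (t • x₀) * φ t := by
            have := (abs_le.mp (h1.trans_eq (mul_comm _ _))).1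
            linarith
          simpa [BoundedContinuousFunction.coe_mul, BoundedContinuousFunction.coe_smul,
            BoundedContinuousFunction.coe_abs, smul_eq_mul] using key
        have hsand := hmean.1.abs_le_of_sandwich hsandL hsandR
        have hmabs : m (‖φ‖ • beb G X x₀ |d|) = ‖φ‖ * ∫ x, |d x| ∂μ := by
          rw [_root_.map_smul, smul_eq_mul]
          congr 1
          have h9 := hμm |d|
          rw [← beb_def x₀ |d|] at h9
          rw [← h9]
          refine integral_congr_ae (Filter.Eventually.of_forall fun x => ?_)
          simp [BoundedContinuousFunction.coe_abs]
        have hdint : ∫ x, |d x| ∂μ ≤ 2 * e n := by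
          have hptd : ∀ x : X, |d x| ≤ |f n (g • x) - ind (g • x)| + |f n x - ind x| := by
            intro x
            have h2 : d x = f n (g • x) - f n x := rfl
            rw [h2]
            calc |f n (g • x) - f n x|
                ≤ |f n (g • x) - ind (g • x)| + |ind (g • x) - f n x| := abs_sub_le _ _ _
              _ = |f n (g • x) - ind (g • x)| + |f n x - ind x| := by
                  rw [hindinv g x, abs_sub_comm (ind x) (f n x)]
          have hmg : Measurable fun x : X => g • x := (hcont g).measurable
          have hG1meas : AEStronglyMeasurable (fun y : X => |f n y - ind y|) μ :=
            ((f n).continuous.measurable.sub hindmeas).abs.aestronglyMeasurable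
          have hG1map : ∫ x, |f n (g • x) - ind (g • x)| ∂μ = e n := by
            have h4 := integral_map (μ := μ) hmg.aemeasurable
              (f := fun y : X => |f n y - ind y|) (by rw [hinvμ g]; exact hG1meas)
            rw [hinvμ g] at h4
            exact h4.symm
          have hG1int : Integrable (fun x : X => |f n (g • x) - ind (g • x)|) μ := by
            have h5 : Integrable (fun y : X => |f n y - ind y|)
                (Measure.map (fun x : X => g • x) μ) := by
              rw [hinvμ g]; exact hediffint n
            have := (integrable_map_measure (by rw [hinvμ g]; exact hG1meas)
              hmg.aemeasurable).mp h5
            exact this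
          calc ∫ x, |d x| ∂μ
              ≤ ∫ x, (|f n (g • x) - ind (g • x)| + |f n x - ind x|) ∂μ := by
                refine integral_mono ?_ (hG1int.add (hediffint n)) hptd
                have : Integrable (⇑|d|) μ := (|d|).integrable μ
                refine this.congr (Filter.Eventually.of_forall fun x => ?_)
                simp [BoundedContinuousFunction.coe_abs]
            _ = e n + e n := by rw [integral_add hG1int (hediffint n), hG1map]
            _ = 2 * e n := by ring
        have hfinal : |m (beb G X x₀ d * φ)| ≤ ‖φ‖ * (2 * e n) := by
          refine hsand.trans ?_
          rw [hmabs]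
          exact mul_le_mul_of_nonneg_left hdint (norm_nonneg φ)
        rw [hd1]
        exact hfinal
      have hzero : Filter.Tendsto (fun n => q (lTrans G g φ) n - q φ n)
          Filter.atTop (nhds 0) := by
        refine squeeze_zero_norm (fun n => by
          simpa [Real.norm_eq_abs] using hdefect n) ?_
        have := heT.const_mul (2 * ‖φ‖)
        simp only [mul_zero] at this
        refine this.congr fun n => by ring
      have h6 : Filter.Tendsto (fun n => q (lTrans G g φ) n - q φ n)
          (natU : Filter ℕ) (nhds (L (lTrans G g φ) - L φ)) :=
        (hLT (lTrans G g φ)).sub (hLT φ)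
      have h7 := tendsto_nhds_unique h6 (hzero.mono_left natU_le_atTop)
      linarith [h7]
    -- the two means
    let M₁ : (G →ᵇ ℝ) →ₗ[ℝ] ℝ :=
      { toFun := fun φ => c⁻¹ * L φ
        map_add' := fun φ χ => by simp only [hLadd]; ring
        map_smul' := fun a φ => by simp only [hLsmul, smul_eq_mul, RingHom.id_apply]; ring }
    let M₂ : (G →ᵇ ℝ) →ₗ[ℝ] ℝ :=
      { toFun := fun φ => (1 - c)⁻¹ * (m φ - L φ)
        map_add' := fun φ χ => by simp only [hLadd, map_add]; ring
        map_smul' := fun a φ => by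
          simp only [hLsmul, _root_.map_smul, smul_eq_mul, RingHom.id_apply]; ring }
    have hM₁app : ∀ φ : G →ᵇ ℝ, M₁ φ = c⁻¹ * L φ := fun _ => rfl
    have hM₂app : ∀ φ : G →ᵇ ℝ, M₂ φ = (1 - c)⁻¹ * (m φ - L φ) := fun _ => rfl
    have hcne : c ≠ 0 := ne_of_gt hc0
    have h1cne : (1 : ℝ) - c ≠ 0 := by linarith
    have hM₁mem : IsLeftInvariantMean G M₁ := by
      refine ⟨⟨?_, ?_⟩, ?_⟩
      · show c⁻¹ * L 1 = 1
        rw [hLone]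
        field_simp
      · intro φ hφ
        show 0 ≤ c⁻¹ * L φ
        exact mul_nonneg (by positivity) (hLpos φ hφ)
      · intro g φ
        show c⁻¹ * L (lTrans G g φ) = c⁻¹ * L φ
        rw [hLinv]
    have hM₂mem : IsLeftInvariantMean G M₂ := by
      have h1c : (0:ℝ) < 1 - c := by linarith
      refine ⟨⟨?_, ?_⟩, ?_⟩
      · show (1 - c)⁻¹ * (m 1 - L 1) = 1
        rw [hLone, hmean.1.1]
        field_simp
      · intro φ hφ
        show 0 ≤ (1 - c)⁻¹ * (m φ - L φ)
        refine mul_nonneg (by positivity) ?_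
        refine ge_of_tendsto ((Filter.Tendsto.const_sub (m φ) (hLT φ)))
          (Filter.Eventually.of_forall fun n => hmqpos φ n hφ)
      · intro g φ
        show (1 - c)⁻¹ * (m (lTrans G g φ) - L (lTrans G g φ)) = (1 - c)⁻¹ * (m φ - L φ)
        rw [hLinv, hmean.2]
    have hseg : m ∈ openSegment ℝ M₁ M₂ := by
      refine ⟨c, 1 - c, hc0, by linarith, by ring, ?_⟩
      refine LinearMap.ext fun φ => ?_
      simp only [LinearMap.add_apply, LinearMap.smul_apply, hM₁app, hM₂app, smul_eq_mul]
      field_simp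
      ring
    have hM₁eq := hm.2 hM₁mem hM₂mem hseg
    -- conclusion : μ.restrict s = μ s • μ
    have hLB : ∀ h : X →ᵇ ℝ, L (beb G X x₀ h) = ∫ x, ind x * h x ∂μ := by
      intro h
      have h1 : ∀ n, q (beb G X x₀ h) n = ∫ x, f n x * h x ∂μ := by
        intro n
        show m (beb G X x₀ (f n) * beb G X x₀ h) = ∫ x, f n x * h x ∂μ
        rw [← beb_mul x₀]
        have h2 := hμm ((f n) * h)
        rw [← beb_def x₀ ((f n) * h)] at h2
        rw [← h2]
        refine integral_congr_ae (Filter.Eventually.of_forall fun x => ?_)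
        simp [BoundedContinuousFunction.coe_mul]
      have h3 : Filter.Tendsto (fun n => ∫ x, f n x * h x ∂μ) Filter.atTop
          (nhds (∫ x, ind x * h x ∂μ)) := by
        have hb : Filter.Tendsto (fun n => ∫ x, f n x * h x ∂μ - ∫ x, ind x * h x ∂μ)
            Filter.atTop (nhds 0) := by
          refine squeeze_zero_norm (fun n => by
            simpa [Real.norm_eq_abs] using hkey n h) ?_
          have := heT.const_mul ‖h‖
          simpa using this
        have := hb.add_const (∫ x, ind x * h x ∂μ)
        simpa using this
      exact tendsto_nhds_unique (hLT (beb G X x₀ h))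
        ((h3.mono_left natU_le_atTop).congr fun n => (h1 n).symm)
    have hfinal : ∀ h : X →ᵇ ℝ, ∫ x, ind x * h x ∂μ = c * ∫ x, h x ∂μ := by
      intro h
      have h1 : m (beb G X x₀ h) = c⁻¹ * L (beb G X x₀ h) := by
        rw [← hM₁eq, hM₁app]
      have h2 : ∫ x, h x ∂μ = c⁻¹ * ∫ x, ind x * h x ∂μ := by
        rw [← hLB h, ← h1]
        have := hμm h
        rw [← beb_def x₀ h] at this
        exact this
      rw [h2]
      field_simp
    haveI : IsFiniteMeasure ((μ s) • μ) := by
      refine ⟨?_⟩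
      rw [Measure.smul_apply, smul_eq_mul, measure_univ, mul_one]
      exact (measure_ne_top μ s).lt_top
    have hmeq : μ.restrict s = (μ s) • μ := by
      apply measure_ext_of_integral_bcf
      intro h
      have h1 : ∫ x, h x ∂(μ.restrict s) = ∫ x, ind x * h x ∂μ := by
        rw [← integral_indicator hsm]
        refine integral_congr_ae (Filter.Eventually.of_forall fun x => ?_)
        by_cases hx : x ∈ s <;> simp [hinddef, Set.indicator_apply, hx]
      have h2 : ∫ x, h x ∂((μ s) • μ) = c * ∫ x, h x ∂μ := by
        rw [integral_smul_measure]
        rfl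
      rw [h1, h2, hfinal h]
    have hcompl : μ sᶜ = 0 := by
      have h1 := congrArg (fun ν : Measure X => ν sᶜ) hmeq
      simp only [Measure.restrict_apply hsm.compl, Set.compl_inter_self,
        measure_empty, Measure.smul_apply, smul_eq_mul] at h1
      rcases mul_eq_zero.mp h1.symm with h | h
      · exact absurd h hs0
      · exact h
    have : μ s = 1 := by
      have h1 := measure_add_measure_compl (μ := μ) hsm
      rw [hcompl, add_zero, measure_univ] at h1
      exact h1
    exact hs1 this
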